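/- arXiv:2504.20210 — 2 statements merged into one kernel-verified Lean document; each statement's English description precedes it below -/
import Mathlib

section
/- Let F be a group and N ⊴ F. Suppose the relation module N/[N,N], viewed as a ℤ[F/N]-module via conjugation, is isomorphic to a direct sum ⊕_{r ∈ R} ℤ[(F/N)/⟨r̄⟩] of permutation modules indexed by a set R. Then N/[F,N] is a free abelian group of rank |R|. -/
open scoped DirectSum

/-- The type synonym `ρ.asModule` of an additive-group representation is itself
an additive group. -/
noncomputable instance repAsModuleAddCommGroup {k G V : Type*} [CommRing k] [Monoid G]
    [AddCommGroup V] [Module k V] (ρ : Representation k G V) :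
    AddCommGroup ρ.asModule :=
  inferInstanceAs (AddCommGroup V)

/-- The permutation module `ℤ[G/H]` as a module over the group ring `ℤ[G]`. -/
noncomputable def PermMod (G : Type*) [Group G] (H : Subgroup G) : Type _ :=
  (Representation.ofMulAction ℤ G (G ⧸ H)).asModule

noncomputable instance (G : Type*) [Group G] (H : Subgroup G) :
    AddCommGroup (PermMod G H) :=
  inferInstanceAs (AddCommGroup ((Representation.ofMulAction ℤ G (G ⧸ H)).asModule))

noncomputable instance (G : Type*) [Group G] (H : Subgroup G) :
    Module (MonoidAlgebra ℤ G) (PermMod G H) :=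
  inferInstanceAs (Module (MonoidAlgebra ℤ G)
    ((Representation.ofMulAction ℤ G (G ⧸ H)).asModule))

section Coinv

variable (G : Type*) [Group G]

/-- The additive subgroup generated by `g • m - m`, whose quotient is the coinvariants. -/
noncomputable def coinvSub (M : Type*) [AddCommGroup M] [Module (MonoidAlgebra ℤ G) M] :
    AddSubgroup M :=
  AddSubgroup.closure {x | ∃ (g : G) (m : M), MonoidAlgebra.of ℤ G g • m - m = x}

variable {M M' : Type*} [AddCommGroup M] [Module (MonoidAlgebra ℤ G) M]
  [AddCommGroup M'] [Module (MonoidAlgebra ℤ G) M']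

lemma smul_sub_mem_coinvSub (g : G) (m : M) :
    MonoidAlgebra.of ℤ G g • m - m ∈ coinvSub G M :=
  AddSubgroup.subset_closure ⟨g, m, rfl⟩

lemma coinvSub_map (e : M ≃ₗ[MonoidAlgebra ℤ G] M') :
    AddSubgroup.map (e.toAddEquiv : M →+ M') (coinvSub G M) = coinvSub G M' := by
  rw [coinvSub, coinvSub, AddMonoidHom.map_closure]
  congr 1
  ext x
  constructor
  · rintro ⟨y, ⟨g, m, rfl⟩, rfl⟩
    refine ⟨g, e m, ?_⟩
    have h : e (MonoidAlgebra.of ℤ G g • m - m)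
        = MonoidAlgebra.of ℤ G g • e m - e m := by
      rw [map_sub, map_smul]
    exact h.symm
  · rintro ⟨g, m', rfl⟩
    refine ⟨MonoidAlgebra.of ℤ G g • e.symm m' - e.symm m', ⟨g, e.symm m', rfl⟩, ?_⟩
    have h : e (MonoidAlgebra.of ℤ G g • e.symm m' - e.symm m')
        = MonoidAlgebra.of ℤ G g • m' - m' := by
      rw [map_sub, map_smul, e.apply_symm_apply]
    exact h

/-- Coinvariants are transported along equivalences of `ℤ[G]`-modules. -/
noncomputable def coinvQuotEquiv (e : M ≃ₗ[MonoidAlgebra ℤ G] M') :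
    (M ⧸ coinvSub G M) ≃+ (M' ⧸ coinvSub G M') :=
  QuotientAddGroup.congr _ _ e.toAddEquiv (coinvSub_map G e)

lemma rep_of_smul {V : Type*} [AddCommGroup V] [Module ℤ V]
    (ρ : Representation ℤ G V) (g : G) (m : ρ.asModule) :
    MonoidAlgebra.of ℤ G g • m = ρ g m := by
  have h := Representation.asModuleEquiv_map_smul ρ (MonoidAlgebra.of ℤ G g) m
  rwa [Representation.asAlgebraHom_of] at h

end Coinv

section Perm

variable (G : Type*) [Group G] {R : Type*} [DecidableEq R] (H : R → Subgroup G)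

/-- The augmentation on a single permutation module. -/
noncomputable def permAugC (H' : Subgroup G) : PermMod G H' →+ ℤ :=
  (Finsupp.liftAddHom fun _ => AddMonoidHom.id ℤ).comp MonoidAlgebra.coeffAddEquiv.toAddMonoidHom

lemma permAugC_single (H' : Subgroup G) (x : G ⧸ H') (c : ℤ) :
    permAugC G H' (MonoidAlgebra.single x c) = c :=
  Finsupp.liftAddHom_apply_single _ _ _

/-- The augmentation map on a direct sum of permutation modules. -/
noncomputable def permAug : (⨁ i, PermMod G (H i)) →+ (R →₀ ℤ) :=
  DirectSum.toAddMonoid fun i => (Finsupp.singleAddHom i).comp (permAugC G (H i))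

/-- A section of the augmentation map. -/
noncomputable def permSigma : (R →₀ ℤ) →+ ⨁ i, PermMod G (H i) :=
  Finsupp.liftAddHom fun i => (DirectSum.of (fun i => PermMod G (H i)) i).comp
    ((MonoidAlgebra.singleAddHom (QuotientGroup.mk (1 : G) : G ⧸ H i) : ℤ →+ MonoidAlgebra ℤ (G ⧸ H i)) :
      ℤ →+ PermMod G (H i))

lemma permAug_of_single (i : R) (x : G ⧸ H i) (c : ℤ) :
    permAug G H (DirectSum.of (fun i => PermMod G (H i)) i (MonoidAlgebra.single x c))
      = Finsupp.single i c := by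
  erw [permAug, DirectSum.toAddMonoid_of, AddMonoidHom.comp_apply, permAugC_single]
  rfl

lemma permMod_of_smul {H' : Subgroup G} (g : G) (m : PermMod G H') :
    MonoidAlgebra.of ℤ G g • m = Representation.ofMulAction ℤ G (G ⧸ H') g m :=
  rep_of_smul G _ g m

lemma directSum_of_smul (r : MonoidAlgebra ℤ G) (i : R) (x : PermMod G (H i)) :
    r • DirectSum.of (fun i => PermMod G (H i)) i x
      = DirectSum.of (fun i => PermMod G (H i)) i (r • x) := by
  rw [← DirectSum.lof_eq_of (MonoidAlgebra ℤ G), ← DirectSum.lof_eq_of (MonoidAlgebra ℤ G),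
    map_smul]

/-- Extensionality principle for hom equality out of the direct sum. -/
lemma permAddHom_ext {γ : Type*} [AddCommMonoid γ] {f g : (⨁ i, PermMod G (H i)) →+ γ}
    (h : ∀ (i : R) (x : G ⧸ H i) (c : ℤ),
      f (DirectSum.of (fun i => PermMod G (H i)) i (MonoidAlgebra.single x c))
        = g (DirectSum.of (fun i => PermMod G (H i)) i (MonoidAlgebra.single x c))) : f = g :=
  DirectSum.addHom_ext fun i x =>
    DFunLike.congr_fun
      (MonoidAlgebra.addMonoidHom_ext
        (f := f.comp (DirectSum.of (fun i => PermMod G (H i)) i))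
        (g := g.comp (DirectSum.of (fun i => PermMod G (H i)) i))
        fun a b => h i a b) x

lemma permAug_smul (g : G) (m : ⨁ i, PermMod G (H i)) :
    permAug G H (MonoidAlgebra.of ℤ G g • m) = permAug G H m := by
  have key : (permAug G H).comp
      (DistribSMul.toAddMonoidHom (⨁ i, PermMod G (H i)) (MonoidAlgebra.of ℤ G g))
        = permAug G H := by
    refine permAddHom_ext G H fun i x c => ?_
    rw [AddMonoidHom.comp_apply]
    rw [show DistribSMul.toAddMonoidHom (⨁ i, PermMod G (H i)) (MonoidAlgebra.of ℤ G g)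
        (DirectSum.of (fun i => PermMod G (H i)) i (MonoidAlgebra.single x c))
      = MonoidAlgebra.of ℤ G g •
        DirectSum.of (fun i => PermMod G (H i)) i (MonoidAlgebra.single x c) from rfl]
    erw [directSum_of_smul, permMod_of_smul, Representation.ofMulAction_single,
      permAug_of_single, permAug_of_single]
  exact DFunLike.congr_fun key m

lemma permAug_mem_ker (x : ⨁ i, PermMod G (H i)) (hx : x ∈ coinvSub G _) :
    permAug G H x = 0 := by
  have h : coinvSub G (⨁ i, PermMod G (H i)) ≤ (permAug G H).ker := by
    rw [coinvSub, AddSubgroup.closure_le]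
    rintro _ ⟨g, m, rfl⟩
    rw [SetLike.mem_coe, AddMonoidHom.mem_ker, map_sub, permAug_smul, sub_self]
  exact h hx

lemma permSigma_single (i : R) (c : ℤ) :
    permSigma G H (Finsupp.single i c) = DirectSum.of (fun i => PermMod G (H i)) i
      (MonoidAlgebra.single (QuotientGroup.mk (1 : G) : G ⧸ H i) c) := by
  rw [permSigma, Finsupp.liftAddHom_apply_single]
  rfl

lemma permAug_sigma (f : R →₀ ℤ) : permAug G H (permSigma G H f) = f := by
  induction f using Finsupp.induction with
  | zero => simp
  | single_add a b f haf hb ih =>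
    rw [map_add, map_add, ih, permSigma_single, permAug_of_single]

lemma sub_sigma_aug_mem (m : ⨁ i, PermMod G (H i)) :
    m - permSigma G H (permAug G H m) ∈ coinvSub G (⨁ i, PermMod G (H i)) := by
  have key : QuotientAddGroup.mk' (coinvSub G (⨁ i, PermMod G (H i)))
      = (QuotientAddGroup.mk' (coinvSub G (⨁ i, PermMod G (H i)))).comp
          ((permSigma G H).comp (permAug G H)) := by
    refine permAddHom_ext G H fun i x c => ?_
    rw [AddMonoidHom.comp_apply, AddMonoidHom.comp_apply, permAug_of_single, permSigma_single]
    rw [QuotientAddGroup.mk'_apply, QuotientAddGroup.mk'_apply, QuotientAddGroup.eq]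
    obtain ⟨g, rfl⟩ := QuotientGroup.mk_surjective x
    have h2 : MonoidAlgebra.of ℤ G g • DirectSum.of (fun i => PermMod G (H i)) i
          (MonoidAlgebra.single (QuotientGroup.mk (1 : G) : G ⧸ H i) c)
        = DirectSum.of (fun i => PermMod G (H i)) i
          (MonoidAlgebra.single (QuotientGroup.mk g : G ⧸ H i) c) := by
      erw [directSum_of_smul, permMod_of_smul, Representation.ofMulAction_single]
      congr 2
      simpa using MulAction.Quotient.smul_mk (H i) g 1
    rw [← h2]
    have := AddSubgroup.neg_mem _ (smul_sub_mem_coinvSub G g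
      (DirectSum.of (fun i => PermMod G (H i)) i
        (MonoidAlgebra.single (QuotientGroup.mk (1 : G) : G ⧸ H i) c)))
    convert this using 1
    abel
  have h := DFunLike.congr_fun key m
  rw [AddMonoidHom.comp_apply, QuotientAddGroup.mk'_apply, QuotientAddGroup.mk'_apply,
    QuotientAddGroup.eq] at h
  have h2 := AddSubgroup.neg_mem _ h
  convert h2 using 1
  abel

/-- The coinvariants of a direct sum of permutation modules. -/
noncomputable def permCoinvEquiv :
    ((⨁ i, PermMod G (H i)) ⧸ coinvSub G (⨁ i, PermMod G (H i))) ≃+ (R →₀ ℤ) := by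
  refine AddEquiv.ofBijective
    (QuotientAddGroup.lift _ (permAug G H) (fun x hx => (AddMonoidHom.mem_ker).mpr (permAug_mem_ker G H x hx))) ⟨?_, ?_⟩
  · rw [injective_iff_map_eq_zero]
    intro q hq
    induction q using QuotientAddGroup.induction_on with
    | H m =>
      rw [QuotientAddGroup.lift_mk'] at hq
      have h := sub_sigma_aug_mem G H m
      rw [hq, map_zero, sub_zero] at h
      simpa [QuotientAddGroup.eq_zero_iff] using h
  · intro f
    exact ⟨QuotientAddGroup.mk (permSigma G H f), by
      rw [QuotientAddGroup.lift_mk', permAug_sigma]⟩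

end Perm

open scoped commutatorElement


/-- If the relation module `N/[N,N]`, viewed as a `ℤ[F/N]`-module via
conjugation (encoded by a representation `ρ` of `G = F/N` on the abelianization
of `N` satisfying `ρ(ḡ)(n[N,N]) = (g n g⁻¹)[N,N]`), is isomorphic to a direct
sum `⊕_{i ∈ R} ℤ[G/⟨r̄ᵢ⟩]` of permutation modules, then `N/[F,N]` is free
abelian of rank `|R|` (i.e. isomorphic to the free abelian group `R →₀ ℤ`). -/
theorem stmt8 {F : Type*} [Group F] (N : Subgroup F) [N.Normal]
    {R : Type*} (r : R → F) (hrN : ∀ i, r i ∈ N)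
    (ρ : Representation ℤ (F ⧸ N) (Additive (Abelianization N)))
    (hρ : ∀ (g : F) (n : N),
      ρ (QuotientGroup.mk g) (Additive.ofMul (Abelianization.of n)) =
        Additive.ofMul (Abelianization.of
          (⟨g * (n : F) * g⁻¹,
            (inferInstance : N.Normal).conj_mem (n : F) n.2 g⟩ : N)))
    (hiso : Nonempty (ρ.asModule ≃ₗ[MonoidAlgebra ℤ (F ⧸ N)]
      (⨁ i : R, PermMod (F ⧸ N)
        (Subgroup.zpowers (QuotientGroup.mk (r i) : F ⧸ N))))) :
    Nonempty ((N ⧸ ((⁅(⊤ : Subgroup F), N⁆).subgroupOf N)) ≃*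
      Multiplicative (R →₀ ℤ)) := by
  classical
  obtain ⟨e⟩ := hiso
  set G := F ⧸ N with hG
  set C : AddSubgroup ρ.asModule := coinvSub G ρ.asModule with hC
  -- the canonical map from `N` to the coinvariants of the relation module
  set φ : ↥N →* Multiplicative (ρ.asModule ⧸ C) :=
  { toFun := fun n => Multiplicative.ofAdd
      (QuotientAddGroup.mk (Additive.ofMul (Abelianization.of n)))
    map_one' := by
      show Multiplicative.ofAdd
        (QuotientAddGroup.mk (Additive.ofMul (Abelianization.of (1 : ↥N)))) = (1 : Multiplicative (ρ.asModule ⧸ C))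
      rw [map_one]
      rfl
    map_mul' := fun a b => by
      show Multiplicative.ofAdd
        (QuotientAddGroup.mk (Additive.ofMul (Abelianization.of (a * b)))) = _
      rw [map_mul]
      rfl } with hφ
  have hφ_apply : ∀ n : ↥N, φ n = Multiplicative.ofAdd
      (QuotientAddGroup.mk (Additive.ofMul (Abelianization.of n))) := fun _ => rfl
  -- surjectivity of Abelianization.of
  have hab : Function.Surjective (Abelianization.of : ↥N →* Abelianization ↥N) :=
    fun y => Quotient.inductionOn y fun n => ⟨n, rfl⟩
  -- surjectivity of φ
  have hsurj : Function.Surjective φ := by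
    intro y
    obtain ⟨x, hx⟩ := QuotientAddGroup.mk_surjective (Multiplicative.toAdd y)
    obtain ⟨n, hn⟩ := hab (Additive.toMul x)
    refine ⟨n, ?_⟩
    rw [hφ_apply]
    have hx2 : Additive.ofMul (Abelianization.of n) = x := by
      rw [hn]; rfl
    erw [hx2, hx]
    rfl
  -- each generator of `C` comes from a commutator, and conversely
  have hsmul : ∀ (f : F) (n : ↥N),
      HSMul.hSMul (β := ρ.asModule) (γ := ρ.asModule)
        (MonoidAlgebra.of ℤ G (QuotientGroup.mk f : G))
        (Additive.ofMul (Abelianization.of n))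
      = Additive.ofMul (Abelianization.of
          (⟨f * (n : F) * f⁻¹,
            (inferInstance : N.Normal).conj_mem (n : F) n.2 f⟩ : ↥N)) := by
    intro f n
    erw [rep_of_smul G ρ, hρ]
  have hdiff : ∀ (a b : ↥N),
      (Additive.ofMul (Abelianization.of (a * b⁻¹)) : ρ.asModule)
        = Additive.ofMul (Abelianization.of a) - Additive.ofMul (Abelianization.of b) := by
    intro a b
    rw [map_mul, map_inv, ← div_eq_mul_inv]
    rfl
  have hgen : ∀ (f : F) (n : ↥N),
      (Additive.ofMul (Abelianization.of
        ((⟨f * (n : F) * f⁻¹,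
            (inferInstance : N.Normal).conj_mem (n : F) n.2 f⟩ : ↥N) * n⁻¹)) : ρ.asModule)
        ∈ C := by
    intro f n
    have h2 := hdiff (⟨f * (n : F) * f⁻¹,
            (inferInstance : N.Normal).conj_mem (n : F) n.2 f⟩ : ↥N) n
    rw [h2, hC, coinvSub]
    refine AddSubgroup.subset_closure
      ⟨(QuotientGroup.mk f : G), Additive.ofMul (Abelianization.of n), ?_⟩
    rw [hsmul f n]
    rfl
  -- kernel computation, direction ⊇ :
  have hker1 : (⁅(⊤ : Subgroup F), N⁆).subgroupOf N ≤ φ.ker := by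
    have hK : ⁅(⊤ : Subgroup F), N⁆ ≤ Subgroup.map N.subtype φ.ker := by
      rw [Subgroup.commutator_le]
      intro f _ x hx
      set n : ↥N := ⟨x, hx⟩ with hn
      refine ⟨(⟨f * (n : F) * f⁻¹,
          (inferInstance : N.Normal).conj_mem (n : F) n.2 f⟩ : ↥N) * n⁻¹, ?_, ?_⟩
      · have hmem : _ ∈ C := hgen f n
        rw [SetLike.mem_coe, MonoidHom.mem_ker, hφ_apply]
        have h0 := (QuotientAddGroup.eq_zero_iff _).mpr hmem
        exact (congrArg Multiplicative.ofAdd h0).trans rfl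
      · show (f * (n : F) * f⁻¹) * (n : F)⁻¹ = ⁅f, x⁆
        rw [commutatorElement_def, hn]
    intro m hm
    have hm' : (m : F) ∈ ⁅(⊤ : Subgroup F), N⁆ := Subgroup.mem_subgroupOf.mp hm
    obtain ⟨w, hw, hweq⟩ := hK hm'
    have : w = m := Subtype.ext hweq
    rwa [this] at hw
  -- kernel computation, direction ⊆ :
  have hker2 : φ.ker ≤ (⁅(⊤ : Subgroup F), N⁆).subgroupOf N := by
    set J : Subgroup ↥N := (⁅(⊤ : Subgroup F), N⁆).subgroupOf N with hJ
    set T : AddSubgroup ρ.asModule :=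
      Subgroup.toAddSubgroup (Subgroup.map (Abelianization.of (G := ↥N)) J) with hT
    have hCT : C ≤ T := by
      rw [hC, coinvSub, AddSubgroup.closure_le]
      rintro _ ⟨g, m, rfl⟩
      obtain ⟨f, rfl⟩ := QuotientGroup.mk_surjective g
      obtain ⟨n₀, hn₀⟩ := hab (Additive.toMul m)
      have hm : m = Additive.ofMul (Abelianization.of n₀) := by rw [hn₀]; rfl
      subst hm
      rw [hsmul f n₀]
      have hwJ : (⟨f * (n₀ : F) * f⁻¹,
          (inferInstance : N.Normal).conj_mem (n₀ : F) n₀.2 f⟩ : ↥N) * n₀⁻¹ ∈ J := by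
        rw [hJ, Subgroup.mem_subgroupOf]
        have hcoe : (((⟨f * (n₀ : F) * f⁻¹,
            (inferInstance : N.Normal).conj_mem (n₀ : F) n₀.2 f⟩ : ↥N) * n₀⁻¹ : ↥N) : F)
            = ⁅f, (n₀ : F)⁆ := by
          rw [commutatorElement_def]
          push_cast
          group
        rw [hcoe]
        exact Subgroup.commutator_mem_commutator (Subgroup.mem_top f) n₀.2
      have hmem : Abelianization.of
          ((⟨f * (n₀ : F) * f⁻¹,
            (inferInstance : N.Normal).conj_mem (n₀ : F) n₀.2 f⟩ : ↥N) * n₀⁻¹)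
          ∈ Subgroup.map (Abelianization.of (G := ↥N)) J := ⟨_, hwJ, rfl⟩
      have hmem' : (Additive.ofMul (Abelianization.of
          ((⟨f * (n₀ : F) * f⁻¹,
            (inferInstance : N.Normal).conj_mem (n₀ : F) n₀.2 f⟩ : ↥N) * n₀⁻¹)) : ρ.asModule)
          ∈ T := hmem
      rw [hdiff] at hmem'
      exact hmem'
    have hcommJ : commutator ↥N ≤ J := by
      rw [commutator, Subgroup.commutator_le]
      intro a _ b _
      rw [hJ, Subgroup.mem_subgroupOf]
      have : ((⁅a, b⁆ : ↥N) : F) = ⁅(a : F), (b : F)⁆ := by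
        rw [commutatorElement_def, commutatorElement_def]
        push_cast
        rfl
      rw [this]
      exact Subgroup.commutator_mem_commutator (Subgroup.mem_top _) b.2
    intro n hn
    rw [MonoidHom.mem_ker, hφ_apply] at hn
    have hn' : (Additive.ofMul (Abelianization.of n) : ρ.asModule) ∈ C := by
      refine (QuotientAddGroup.eq_zero_iff (N := C)
        (Additive.ofMul (Abelianization.of n) : ρ.asModule)).mp ?_
      exact congrArg Multiplicative.toAdd hn
    have hn'' : Abelianization.of n ∈ Subgroup.map (Abelianization.of (G := ↥N)) J :=
      hCT hn'
    obtain ⟨w, hwJ, hww⟩ := Subgroup.mem_map.mp hn''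
    have hcomm : w⁻¹ * n ∈ commutator ↥N := by
      rw [← QuotientGroup.eq]
      exact hww
    have hsplit : n = w * (w⁻¹ * n) := by group
    rw [hJ] at hwJ ⊢
    rw [hsplit]
    exact Subgroup.mul_mem _ hwJ (hcommJ hcomm)
  have hker : φ.ker = (⁅(⊤ : Subgroup F), N⁆).subgroupOf N := le_antisymm hker2 hker1
  -- assemble the isomorphisms
  have e1 : (↥N ⧸ (⁅(⊤ : Subgroup F), N⁆).subgroupOf N) ≃* (↥N ⧸ φ.ker) :=
    QuotientGroup.quotientMulEquivOfEq hker.symm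
  have e2 : (↥N ⧸ φ.ker) ≃* Multiplicative (ρ.asModule ⧸ C) :=
    QuotientGroup.quotientKerEquivOfSurjective φ hsurj
  have e3' := coinvQuotEquiv G e
  have e4' := permCoinvEquiv G (fun i => Subgroup.zpowers (QuotientGroup.mk (r i) : G))
  exact ⟨((e1.trans e2).trans (AddEquiv.toMultiplicative e3')).trans
    (AddEquiv.toMultiplicative e4')⟩
end

section
/- Let F be a free group and N a normal subgroup such that F/N is torsion-free and N/[F,N] is free abelian. Then F/[F,N] is torsion-free. -/
/-- A monoid is torsion-free if no nontrivial element has finite order (Mathlib definition of Dec 2024, since removed). -/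
def Monoid.IsTorsionFree (G : Type*) [Monoid G] : Prop :=
  ∀ g : G, g ≠ 1 → ¬IsOfFinOrder g

/-- For a free group `F` and `N ⊴ F` with `F/N` torsion-free and `N/[F,N]`
free abelian, the group `F/[F,N]` is torsion-free. -/
theorem stmt16 {α : Type*} (N : Subgroup (FreeGroup α)) [N.Normal]
    (hQtf : Monoid.IsTorsionFree (FreeGroup α ⧸ N))
    (β : Type*)
    (e : (N ⧸ ((⁅(⊤ : Subgroup (FreeGroup α)), N⁆).subgroupOf N)) ≃*
      Multiplicative (β →₀ ℤ)) :
    Monoid.IsTorsionFree (FreeGroup α ⧸ ⁅(⊤ : Subgroup (FreeGroup α)), N⁆) := by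
  set K : Subgroup (FreeGroup α) := ⁅(⊤ : Subgroup (FreeGroup α)), N⁆ with hK
  have hKN : K ≤ N := Subgroup.commutator_le_right ⊤ N
  intro g hg hfin
  let φ : (FreeGroup α ⧸ K) →* FreeGroup α ⧸ N :=
    QuotientGroup.map K N (MonoidHom.id _) (by simpa using hKN)
  have hφg : φ g = 1 := by
    by_contra h
    exact hQtf _ h (φ.isOfFinOrder hfin)
  obtain ⟨x, rfl⟩ := QuotientGroup.mk_surjective g
  have hx : x ∈ N := by
    rwa [show φ (QuotientGroup.mk x) = QuotientGroup.mk x from rfl,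
      QuotientGroup.eq_one_iff] at hφg
  let ψ : (N ⧸ K.subgroupOf N) →* FreeGroup α ⧸ K :=
    QuotientGroup.map (K.subgroupOf N) K N.subtype (fun n hn => hn)
  have hψinj : Function.Injective ψ := by
    rw [injective_iff_map_eq_one]
    intro y hy
    induction y using QuotientGroup.induction_on with
    | H n =>
      rw [show ψ (QuotientGroup.mk n) = QuotientGroup.mk (n : FreeGroup α) from rfl,
        QuotientGroup.eq_one_iff] at hy
      rw [QuotientGroup.eq_one_iff]
      exact hy
  set y : N ⧸ K.subgroupOf N := QuotientGroup.mk ⟨x, hx⟩ with hy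
  have hψy : ψ y = QuotientGroup.mk x := rfl
  obtain ⟨n, hn, hpow⟩ := isOfFinOrder_iff_pow_eq_one.mp hfin
  have hyn : y ^ n = 1 := by
    apply hψinj
    rw [map_pow, hψy, map_one, hpow]
  have heyn : (e y) ^ n = 1 := by rw [← map_pow, hyn, map_one]
  have hey : e y = 1 := by
    have h1 : n • Multiplicative.toAdd (e y) = 0 := by
      simpa [toAdd_pow] using congrArg Multiplicative.toAdd heyn
    have h0 : Multiplicative.toAdd (e y) = 0 := by
      rcases smul_eq_zero.mp h1 with h | h
      · exact absurd h hn.ne'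
      · exact h
    exact h0
  have : y = 1 := by
    apply e.injective
    rw [hey, map_one]
  apply hg
  rw [← hψy, this, map_one]
end
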